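/- Fix g2, g3 ∈ ℂ, let r(u) := 4u³ − g2·u − g3, and let H(u,v,w) := (uv+vw+wu+g2/4)² − (u+v+w)(4uvw−g3). Then for all u, v, w ∈ ℂ, (∂H/∂v)(u,v,w)² − 2·H(u,v,w)·(∂²H/∂v²)(u,v,w) = r(u)·r(w), where the derivatives are taken in the middle variable v (H is a quadratic polynomial in v, so ∂H/∂v and ∂²H/∂v² are its first and second derivatives in v). -/
import Mathlib

/-- The Weierstrass cubic polynomial `r(u) = 4u³ − g₂u − g₃`. -/
def weierstrassR (g2 g3 u : ℂ) : ℂ := 4 * u ^ 3 - g2 * u - g3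

/-- The symmetric polynomial `H(u,v,w)` encoding the addition theorem on the
elliptic curve `A² = r(a)`. -/
noncomputable def weierstrassH (g2 g3 u v w : ℂ) : ℂ :=
  (u * v + v * w + w * u + g2 / 4) ^ 2 - (u + v + w) * (4 * u * v * w - g3)

lemma quad_deriv (a b c : ℂ) :
    deriv (fun x : ℂ => a * x ^ 2 + (b * x + c)) = fun x => 2 * a * x + b := by
  funext x
  have h : HasDerivAt (fun x : ℂ => a * x ^ 2 + (b * x + c))
      (a * (↑2 * x ^ 1) + (b * 1 + 0)) x := by
    exact ((hasDerivAt_pow 2 x).const_mul a).add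
      (((hasDerivAt_id x).const_mul b).add (hasDerivAt_const x c))
  rw [h.deriv]; ring

/-- The discriminant identity `H_v² − 2·H·H_vv = r(u)·r(w)`, the derivatives
being taken in the middle variable `v`. -/
theorem weierstrassH_discriminant_identity (g2 g3 : ℂ) :
    ∀ u v w : ℂ,
      (deriv (fun v' => weierstrassH g2 g3 u v' w) v) ^ 2
        - 2 * weierstrassH g2 g3 u v w
          * deriv (deriv (fun v' => weierstrassH g2 g3 u v' w)) v
      = weierstrassR g2 g3 u * weierstrassR g2 g3 w := by
  intro u v w
  set a := (u + w) ^ 2 - 4 * u * w with ha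
  set b := 2 * (u + w) * (u * w + g2 / 4) + g3 - 4 * u * w * (u + w) with hb
  set c := (u * w + g2 / 4) ^ 2 + (u + w) * g3 with hc
  have hfun : (fun v' => weierstrassH g2 g3 u v' w)
      = fun x : ℂ => a * x ^ 2 + (b * x + c) := by
    funext x; simp only [weierstrassH, ha, hb, hc]; ring
  have hlin : deriv (fun x : ℂ => 2 * a * x + b) = fun _ => 2 * a := by
    have := quad_deriv 0 (2 * a) b
    simpa using this
  rw [hfun, quad_deriv, hlin]
  show (2 * a * v + b) ^ 2 - 2 * weierstrassH g2 g3 u v w * (2 * a) = _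
  simp only [weierstrassH, weierstrassR, ha, hb, hc]
  ring
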